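/- If A is an n×n stochastic matrix with all diagonal entries positive, then the sequence of powers A^t converges exponentially: there exist an n×n matrix A^∞, a constant M > 0 and λ ∈ (0,1) such that ‖A^t − A^∞‖_∞ ≤ M λ^t for all t ≥ 0, where ‖·‖_∞ denotes the maximum absolute entry of a matrix. -/

import Mathlib

open Finset Filter Topology Matrix

/-- An `n × n` real matrix is stochastic if all entries are nonnegative and
every row sums to `1`. -/
def IsStochastic {n : ℕ} (A : Matrix (Fin n) (Fin n) ℝ) : Prop :=
  (∀ i j, 0 ≤ A i j) ∧ ∀ i, ∑ j, A i j = 1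

/-- A clustering of `{1,…,n}`: pairwise disjoint subsets whose union is everything. -/
def IsClustering {n K : ℕ} (C : Fin K → Finset (Fin n)) : Prop :=
  (∀ p q, p ≠ q → Disjoint (C p) (C q)) ∧ ∀ i, ∃ p, i ∈ C p

/-- Reachability along directed edges of `G(A)`: edge from `j` to `i` iff `A i j > 0`. -/
def Reaches {n : ℕ} (A : Matrix (Fin n) (Fin n) ℝ) : Fin n → Fin n → Prop :=
  Relation.ReflTransGen fun j i => 0 < A i j

/-- `A` has cluster-spanning-trees w.r.t. `C`: for each cluster there is a vertex from
which every vertex of the cluster is reachable in `G(A)`. -/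
def HasClusterSpanningTrees {n K : ℕ} (C : Fin K → Finset (Fin n))
    (A : Matrix (Fin n) (Fin n) ℝ) : Prop :=
  ∀ p, ∃ v, ∀ i ∈ C p, Reaches A v i

/-- Inter-cluster common influence: `∑_{j ∈ C q} A i j` is the same for all `i ∈ C p`. -/
def InterClusterCommonInfluence {n K : ℕ} (C : Fin K → Finset (Fin n))
    (A : Matrix (Fin n) (Fin n) ℝ) : Prop :=
  ∀ p q, ∀ i ∈ C p, ∀ i' ∈ C p, ∑ j ∈ C q, A i j = ∑ j ∈ C q, A i' j

/-- Cluster ergodicity coefficient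
`μ_C(A) = min_p min_{i,j ∈ C p} ∑_k min (A i k) (A j k)`. -/
noncomputable def muC {n K : ℕ} (C : Fin K → Finset (Fin n))
    (A : Matrix (Fin n) (Fin n) ℝ) : ℝ :=
  sInf {s | ∃ p, ∃ i ∈ C p, ∃ j ∈ C p, s = ∑ k, min (A i k) (A j k)}

/-- Cluster Hajnal diameter `Δ_C(A) = max_p max_{i,j ∈ C p} max_k |A i k - A j k|`. -/
noncomputable def DeltaC {n K : ℕ} (C : Fin K → Finset (Fin n))
    (A : Matrix (Fin n) (Fin n) ℝ) : ℝ :=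
  sSup {d | ∃ p, ∃ i ∈ C p, ∃ j ∈ C p, ∃ k, d = |A i k - A j k|}

/-- The cluster-consensus subspace `S_C`. -/
def SC {n K : ℕ} (C : Fin K → Finset (Fin n)) : Set (Fin n → ℝ) :=
  {x | ∀ p, ∀ i ∈ C p, ∀ j ∈ C p, x i = x j}

/-- Left product `prodFrom A a m = A (a+m-1) * ⋯ * A (a+1) * A a` (with `m` factors). -/
def prodFrom {n : ℕ} (A : ℕ → Matrix (Fin n) (Fin n) ℝ) (a : ℕ) :
    ℕ → Matrix (Fin n) (Fin n) ℝ
  | 0 => 1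
  | m + 1 => A (a + m) * prodFrom A a m


section StochasticAux

open Polynomial

attribute [local instance] Matrix.linftyOpNormedRing Matrix.linftyOpNormedAlgebra

lemma stoch_mul {n : ℕ} {A B : Matrix (Fin n) (Fin n) ℝ} (hA : IsStochastic A)
    (hB : IsStochastic B) : IsStochastic (A * B) := by
  constructor
  · intro i j
    rw [Matrix.mul_apply]
    exact Finset.sum_nonneg fun k _ => mul_nonneg (hA.1 i k) (hB.1 k j)
  · intro i
    simp_rw [Matrix.mul_apply]
    rw [Finset.sum_comm]
    simp_rw [← Finset.mul_sum, hB.2, mul_one]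
    exact hA.2 i

lemma stoch_pow {n : ℕ} {A : Matrix (Fin n) (Fin n) ℝ} (hA : IsStochastic A) (t : ℕ) :
    IsStochastic (A ^ t) := by
  induction t with
  | zero =>
    refine ⟨fun i j => ?_, fun i => ?_⟩
    · rw [pow_zero]; by_cases h : i = j <;> simp [Matrix.one_apply, h]
    · rw [pow_zero]; simp [Matrix.one_apply]
  | succ t ih => rw [pow_succ]; exact stoch_mul ih hA

lemma stoch_mulVec_bound {n : ℕ} {A : Matrix (Fin n) (Fin n) ℝ} (hA : IsStochastic A)
    (x : Fin n → ℂ) (C : ℝ) (hC : ∀ j, ‖x j‖ ≤ C) (i : Fin n) :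
    ‖((A.map (Complex.ofReal)) *ᵥ x) i‖ ≤ C := by
  have : ((A.map (Complex.ofReal)) *ᵥ x) i = ∑ j, (A i j : ℂ) * x j := by
    simp [Matrix.mulVec, dotProduct, Matrix.map_apply]
  rw [this]
  calc ‖∑ j, (A i j : ℂ) * x j‖ ≤ ∑ j, ‖(A i j : ℂ) * x j‖ := norm_sum_le _ _
    _ ≤ ∑ j, A i j * C := by
        refine Finset.sum_le_sum fun j _ => ?_
        rw [norm_mul, Complex.norm_real, Real.norm_of_nonneg (hA.1 i j)]
        exact mul_le_mul_of_nonneg_left (hC j) (hA.1 i j)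
    _ = C := by rw [← Finset.sum_mul, hA.2, one_mul]

lemma eig_dichotomy {n : ℕ} {A : Matrix (Fin n) (Fin n) ℝ} (hA : IsStochastic A)
    (hdiag : ∀ i, 0 < A i i) {μ : ℂ} {x : Fin n → ℂ} (hx : x ≠ 0)
    (hev : (A.map (Complex.ofReal)) *ᵥ x = μ • x) : μ = 1 ∨ ‖μ‖ < 1 := by
  -- pick i maximizing ‖x i‖
  have hne : (Finset.univ : Finset (Fin n)).Nonempty := by
    rcases Function.ne_iff.mp hx with ⟨i, -⟩
    exact ⟨i, Finset.mem_univ i⟩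
  obtain ⟨i, -, hi⟩ := Finset.exists_max_image Finset.univ (fun j => ‖x j‖) hne
  have hxi : 0 < ‖x i‖ := by
    rcases Function.ne_iff.mp hx with ⟨k, hk⟩
    have : 0 < ‖x k‖ := by simpa [norm_pos_iff] using hk
    exact lt_of_lt_of_le this (hi k (Finset.mem_univ k))
  set c : ℝ := A i i with hc
  have hc0 : 0 < c := hdiag i
  have hc1 : c ≤ 1 := by
    have := hA.2 i
    have h1 : ∑ j ∈ Finset.univ.erase i, A i j ≥ 0 :=
      Finset.sum_nonneg fun j _ => hA.1 i j
    have : A i i + ∑ j ∈ Finset.univ.erase i, A i j = 1 := by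
      rw [← this, ← Finset.add_sum_erase _ _ (Finset.mem_univ i)]
    linarith
  -- key inequality ‖μ - c‖ ≤ 1 - c
  have key : ‖μ - (c:ℂ)‖ ≤ 1 - c := by
    have heq : (μ - c) * x i = ∑ j ∈ Finset.univ.erase i, (A i j : ℂ) * x j := by
      have h0 : ∑ j, (A i j : ℂ) * x j = μ * x i := by
        have := congrFun hev i
        simpa [Matrix.mulVec, dotProduct, Matrix.map_apply] using this
      rw [← Finset.add_sum_erase _ _ (Finset.mem_univ i)] at h0
      push_cast
      rw [sub_mul]
      rw [← h0, hc]
      ring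
    have hnorm : ‖μ - (c:ℂ)‖ * ‖x i‖ ≤ (1 - c) * ‖x i‖ := by
      rw [← norm_mul, heq]
      calc ‖∑ j ∈ Finset.univ.erase i, (A i j : ℂ) * x j‖
          ≤ ∑ j ∈ Finset.univ.erase i, ‖(A i j : ℂ) * x j‖ := norm_sum_le _ _
        _ ≤ ∑ j ∈ Finset.univ.erase i, A i j * ‖x i‖ := by
            refine Finset.sum_le_sum fun j _ => ?_
            rw [norm_mul, Complex.norm_real, Real.norm_of_nonneg (hA.1 i j)]
            exact mul_le_mul_of_nonneg_left (hi j (Finset.mem_univ j)) (hA.1 i j)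
        _ = (1 - c) * ‖x i‖ := by
            rw [← Finset.sum_mul]
            congr 1
            have := hA.2 i
            rw [← Finset.add_sum_erase _ _ (Finset.mem_univ i)] at this
            linarith
    exact le_of_mul_le_mul_right hnorm hxi
  -- conclude
  by_cases hμ : μ = 1
  · exact Or.inl hμ
  · right
    have hle : ‖μ‖ ≤ 1 := by
      calc ‖μ‖ ≤ ‖μ - (c:ℂ)‖ + ‖(c:ℂ)‖ := by simpa using norm_add_le (μ - (c:ℂ)) (c:ℂ)
      _ ≤ (1 - c) + c := by
          rw [Complex.norm_real, Real.norm_of_nonneg hc0.le]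
          linarith [key]
      _ = 1 := by ring
    rcases lt_or_eq_of_le hle with h | h
    · exact h
    · -- ‖μ‖ = 1 forces μ = 1
      exfalso
      apply hμ
      have h2 : ‖μ - (c:ℂ)‖^2 ≤ (1 - c)^2 := by
        have := key; nlinarith [norm_nonneg (μ - (c:ℂ))]
      have hnsq : ∀ z : ℂ, ‖z‖^2 = z.re^2 + z.im^2 := fun z => by
        rw [Complex.sq_norm, Complex.normSq_apply]; ring
      have e1 : ‖μ - (c:ℂ)‖^2 = ‖μ‖^2 - 2*c*μ.re + c^2 := by
        rw [hnsq (μ - (c:ℂ)), hnsq μ]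
        simp [Complex.sub_re, Complex.sub_im, Complex.ofReal_re, Complex.ofReal_im]
        ring
      have habs : μ.re^2 + μ.im^2 = 1 := by
        have := hnsq μ; rw [h] at this; nlinarith
      have hre : 1 ≤ μ.re := by
        rw [e1, h] at h2; nlinarith
      have him : μ.im = 0 := by nlinarith
      have hr1 : μ.re = 1 := by nlinarith
      exact Complex.ext (by simpa using hr1) (by simpa using him)

lemma entry_le_norm (M : Matrix (Fin n) (Fin n) ℂ) (i j : Fin n) : ‖M i j‖ ≤ ‖M‖ := by
  have h1 : ‖M i j‖₊ ≤ ∑ k, ‖M i k‖₊ :=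
    Finset.single_le_sum (f := fun k => ‖M i k‖₊) (fun k _ => by positivity) (Finset.mem_univ j)
  have h2 : (∑ k, ‖M i k‖₊) ≤ ‖M‖₊ := by
    rw [Matrix.linfty_opNNNorm_def]
    exact Finset.le_sup (f := fun i => ∑ k, ‖M i k‖₊) (Finset.mem_univ i)
  exact_mod_cast h1.trans h2

theorem stmt1 {n : ℕ} (A : Matrix (Fin n) (Fin n) ℝ)
    (hA : IsStochastic A) (hdiag : ∀ i, 0 < A i i) :
    ∃ (Ainf : Matrix (Fin n) (Fin n) ℝ) (M lam : ℝ), 0 < M ∧ 0 < lam ∧ lam < 1 ∧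
      ∀ (t : ℕ) (i j : Fin n), |(A ^ t) i j - Ainf i j| ≤ M * lam ^ t := by
  rcases Nat.eq_zero_or_pos n with hn | hn
  · subst hn
    exact ⟨0, 1, 1/2, one_pos, by norm_num, by norm_num, fun t i j => i.elim0⟩
  haveI : NeZero n := ⟨hn.ne'⟩
  haveI : Nonempty (Fin n) := ⟨⟨0, hn⟩⟩
  set Ac : Matrix (Fin n) (Fin n) ℂ := A.map Complex.ofReal with hAc
  have hmap_pow : ∀ t : ℕ, (A ^ t).map Complex.ofReal = Ac ^ t := by
    intro t
    have : (A ^ t).map Complex.ofReal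
        = (Complex.ofRealHom.mapMatrix : Matrix (Fin n) (Fin n) ℝ →+* _) (A ^ t) := rfl
    rw [this, map_pow]; rfl
  -- minimal polynomial machinery
  have hint : IsIntegral ℂ Ac := IsIntegral.of_finite ℂ Ac
  set p : ℂ[X] := minpoly ℂ Ac with hpdef
  have hp0 : p ≠ 0 := minpoly.ne_zero hint
  have haevalp : aeval Ac p = 0 := minpoly.aeval ℂ Ac
  -- roots of p are eigenvalues
  have hroot_ev : ∀ μ : ℂ, p.IsRoot μ → ∃ x : Fin n → ℂ, x ≠ 0 ∧ Ac *ᵥ x = μ • x := by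
    intro μ hμ
    have hmin : minpoly ℂ ((Matrix.toLinAlgEquiv' Ac : _) : Module.End ℂ (Fin n → ℂ)) = p :=
      minpoly.algEquiv_eq _ _
    have hev : Module.End.HasEigenvalue ((Matrix.toLinAlgEquiv' Ac : _) : Module.End ℂ (Fin n → ℂ)) μ :=
      Module.End.hasEigenvalue_of_isRoot (by rwa [hmin])
    obtain ⟨v, hv⟩ := Module.End.HasEigenvalue.exists_hasEigenvector hev
    exact ⟨v, hv.right, by rw [← Matrix.toLinAlgEquiv'_apply, hv.apply_eq_smul]⟩
  set m := p.rootMultiplicity 1 with hm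
  obtain ⟨q, hq, hndvd⟩ := p.exists_eq_pow_rootMultiplicity_mul_and_not_dvd hp0 1
  rw [← hm] at hq
  have hq0 : q ≠ 0 := fun h => hp0 (by rw [hq, h, mul_zero])
  have hq1 : ¬ q.IsRoot 1 := fun h => hndvd (Polynomial.dvd_iff_isRoot.mpr h)
  -- all roots of q have norm < 1
  have hqroots : ∀ μ : ℂ, q.IsRoot μ → ‖μ‖ < 1 := by
    intro μ hμ
    have hpμ : p.IsRoot μ := hμ.dvd ⟨(X - C 1) ^ m, by rw [hq, mul_comm]⟩
    obtain ⟨x, hx0, hev⟩ := hroot_ev μ hpμ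
    rcases eig_dichotomy hA hdiag hx0 hev with h1 | h1
    · exact absurd (h1 ▸ hμ) hq1
    · exact h1
  -- multiplicity of 1 is at most 1
  have hm1 : m ≤ 1 := by
    by_contra hcon
    push_neg at hcon
    -- m ≥ 2
    obtain ⟨s, hs⟩ : ∃ s : ℂ[X], s = (X - C 1) ^ (m - 1) * q := ⟨_, rfl⟩
    have hsne : aeval Ac s ≠ 0 := by
      intro h0
      have hdvd : p ∣ s := minpoly.dvd ℂ Ac h0
      have hs0 : s ≠ 0 := hs ▸ mul_ne_zero (pow_ne_zero _ (Polynomial.X_sub_C_ne_zero 1)) hq0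
      have := Polynomial.natDegree_le_of_dvd hdvd hs0
      rw [hq] at this
      rw [hs] at this
      rw [Polynomial.natDegree_mul (pow_ne_zero _ (Polynomial.X_sub_C_ne_zero 1)) hq0,
        Polynomial.natDegree_mul (pow_ne_zero _ (Polynomial.X_sub_C_ne_zero 1)) hq0,
        Polynomial.natDegree_pow, Polynomial.natDegree_pow, Polynomial.natDegree_X_sub_C] at this
      omega
    -- get y with (aeval Ac s) *ᵥ y ≠ 0
    have : ∃ y : Fin n → ℂ, (aeval Ac s) *ᵥ y ≠ 0 := by
      by_contra hy
      push_neg at hy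
      apply hsne
      apply Matrix.ext
      intro i j
      have := congrFun (hy (Pi.single j 1)) i
      simpa [Matrix.mulVec_single] using this
    obtain ⟨y, hy⟩ := this
    obtain ⟨G, hG⟩ : ∃ G : Matrix (Fin n) (Fin n) ℂ, G = aeval Ac ((X - C 1) ^ (m - 2) * q) :=
      ⟨_, rfl⟩
    obtain ⟨x, hx⟩ : ∃ x : Fin n → ℂ, x = G *ᵥ y := ⟨_, rfl⟩
    obtain ⟨w, hw⟩ : ∃ w : Fin n → ℂ, w = (aeval Ac s) *ᵥ y := ⟨_, rfl⟩
    have hAx : Ac *ᵥ x = x + w := by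
      have h1 : (X - C 1) * ((X - C 1) ^ (m - 2) * q) = s := by
        rw [hs, ← mul_assoc, ← pow_succ']
        congr 2
        omega
      have hX1 : aeval Ac (X - C (1:ℂ)) = Ac - 1 := by simp
      have h2 : Ac * G - G = aeval Ac s := by
        rw [← h1, _root_.map_mul, hX1, ← hG, sub_mul, one_mul]
      have h3 : Ac * G = G + aeval Ac s := by
        rw [← h2]; abel
      calc Ac *ᵥ x = (Ac * G) *ᵥ y := by rw [hx, Matrix.mulVec_mulVec]
        _ = (G + aeval Ac s) *ᵥ y := by rw [h3]
        _ = x + w := by rw [Matrix.add_mulVec, ← hx, ← hw]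
    have hAw : Ac *ᵥ w = w := by
      have h1 : (X - C 1) * s = p := by
        rw [hs, hq, ← mul_assoc, ← pow_succ']
        congr 2
        omega
      have hX1 : aeval Ac (X - C (1:ℂ)) = Ac - 1 := by simp
      have h2 : Ac * aeval Ac s - aeval Ac s = 0 := by
        rw [← haevalp, ← h1, _root_.map_mul, hX1, sub_mul, one_mul]
      have h3 : Ac * aeval Ac s = aeval Ac s := sub_eq_zero.mp h2
      rw [hw, Matrix.mulVec_mulVec, h3]
    -- iterate
    have hiter : ∀ t : ℕ, (Ac ^ t) *ᵥ x = x + (t : ℂ) • w := by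
      intro t
      induction t with
      | zero => simp
      | succ t ih =>
        rw [pow_succ']
        rw [← Matrix.mulVec_mulVec, ih]
        rw [Matrix.mulVec_add, hAx, Matrix.mulVec_smul, hAw]
        push_cast
        module
    -- bound
    set C : ℝ := Finset.univ.sup' Finset.univ_nonempty (fun j => ‖x j‖) with hC
    have hCb : ∀ j, ‖x j‖ ≤ C := fun j => Finset.le_sup' (f := fun j => ‖x j‖) (Finset.mem_univ j)
    have hbound : ∀ t : ℕ, ∀ i, ‖(x + (t:ℂ) • w) i‖ ≤ C := by
      intro t i
      rw [← hiter t, ← hmap_pow t]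
      exact stoch_mulVec_bound (stoch_pow hA t) x C hCb i
    obtain ⟨k, hk⟩ := Function.ne_iff.mp hy
    rw [← hw] at hk
    have hwk : 0 < ‖w k‖ := by simpa [norm_pos_iff] using hk
    obtain ⟨t, ht⟩ := exists_nat_gt ((C + ‖x k‖) / ‖w k‖)
    have h1 : C + ‖x k‖ < t * ‖w k‖ := by
      rw [div_lt_iff₀ hwk] at ht
      linarith
    have h2 := hbound t k
    have h4 : (x + (t:ℂ) • w) k = x k + (t:ℂ) * w k := by simp
    rw [h4] at h2
    have h5 : ‖(t:ℂ) * w k‖ - ‖x k‖ ≤ ‖x k + (t:ℂ) * w k‖ := by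
      have h := norm_sub_norm_le ((t:ℂ) * w k) (-(x k))
      rw [norm_neg, sub_neg_eq_add, add_comm] at h
      exact h
    have h6 : ‖(t:ℂ) * w k‖ = t * ‖w k‖ := by
      rw [norm_mul, Complex.norm_natCast]
    linarith
  -- construct the spectral projection E at eigenvalue 1
  have hE : ∃ E : Matrix (Fin n) (Fin n) ℂ,
      Ac * E = E ∧ E * Ac = E ∧ E * E = E ∧ aeval Ac q * (1 - E) = 0 := by
    rcases Nat.le_one_iff_eq_zero_or_eq_one.mp hm1 with h0 | h1
    · refine ⟨0, by simp, by simp, by simp, ?_⟩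
      have hqp : q = p := by rw [hq, h0, pow_zero, one_mul]
      rw [hqp, haevalp, zero_mul]
    · have hirr : Irreducible (X - C (1:ℂ)) := Polynomial.irreducible_X_sub_C 1
      have hcop : IsCoprime (X - C (1:ℂ)) q := (hirr.coprime_iff_not_dvd).mpr hndvd
      obtain ⟨u, v, huv⟩ := hcop
      have h1E : (1 : Matrix (Fin n) (Fin n) ℂ) - aeval Ac (v * q) = aeval Ac (u * (X - C 1)) := by
        have := congrArg (aeval Ac) huv
        rw [map_add, aeval_one] at this
        rw [← this]; abel
      refine ⟨aeval Ac (v * q), ?_, ?_, ?_, ?_⟩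
      · have hid : (X - C (1:ℂ)) * (v * q) = v * p := by rw [hq, h1, pow_one]; ring
        have h3 : aeval Ac ((X - C (1:ℂ)) * (v * q)) = 0 := by
          rw [hid, _root_.map_mul, haevalp, mul_zero]
        rw [_root_.map_mul] at h3
        simp only [map_sub, aeval_X, aeval_C, _root_.map_one] at h3
        have h2 : Ac * aeval Ac (v * q) - aeval Ac (v * q) = 0 := by
          rw [← h3, sub_mul, one_mul]
        exact sub_eq_zero.mp h2
      · have hid : (v * q) * (X - C (1:ℂ)) = v * p := by rw [hq, h1, pow_one]; ring
        have h3 : aeval Ac ((v * q) * (X - C (1:ℂ))) = 0 := by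
          rw [hid, _root_.map_mul, haevalp, mul_zero]
        rw [_root_.map_mul] at h3
        simp only [map_sub, aeval_X, aeval_C, _root_.map_one] at h3
        have h2 : aeval Ac (v * q) * Ac - aeval Ac (v * q) = 0 := by
          rw [← h3, mul_sub, mul_one]
        exact sub_eq_zero.mp h2
      · have hid : (v * q) * (u * (X - C (1:ℂ))) = (u * v) * p := by
          rw [hq, h1, pow_one]; ring
        have h3 : aeval Ac ((v * q) * (u * (X - C (1:ℂ)))) = 0 := by
          rw [hid, _root_.map_mul, haevalp, mul_zero]
        rw [_root_.map_mul, ← h1E] at h3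
        have h4 : aeval Ac (v * q) - aeval Ac (v * q) * aeval Ac (v * q) = 0 := by
          rw [← h3, mul_sub, mul_one]
        exact (sub_eq_zero.mp h4).symm
      · have hid : q * (u * (X - C (1:ℂ))) = u * p := by rw [hq, h1, pow_one]; ring
        have h3 : aeval Ac (q * (u * (X - C (1:ℂ)))) = 0 := by
          rw [hid, _root_.map_mul, haevalp, mul_zero]
        rw [_root_.map_mul, ← h1E] at h3
        exact h3
  obtain ⟨E, hAE, hEA, hEE, hqE⟩ := hE
  obtain ⟨B, hB⟩ : ∃ B : Matrix (Fin n) (Fin n) ℂ, B = Ac - E := ⟨_, rfl⟩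
  have hEAk : ∀ k : ℕ, E * Ac ^ k = E := by
    intro k
    induction k with
    | zero => simp
    | succ k ih => rw [pow_succ, ← mul_assoc, ih, hEA]
  have hAkE : ∀ k : ℕ, Ac ^ k * E = E := by
    intro k
    induction k with
    | zero => simp
    | succ k ih => rw [pow_succ, mul_assoc, hAE, ih]
  have hBk : ∀ k : ℕ, B ^ (k + 1) = Ac ^ (k + 1) * (1 - E) := by
    intro k
    induction k with
    | zero =>
        rw [pow_one, pow_one, mul_sub, mul_one, hAE, hB]
    | succ k ih =>
        rw [pow_succ', ih, hB]
        rw [sub_mul (Ac) E (Ac ^ (k + 1) * (1 - E)), ← mul_assoc E, hEAk,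
          mul_sub E, mul_one, hEE, sub_self, sub_zero, ← mul_assoc, ← pow_succ']
  have hBt : ∀ t : ℕ, 1 ≤ t → B ^ t = Ac ^ t - E := by
    intro t ht
    obtain ⟨k, rfl⟩ := Nat.exists_eq_add_of_le ht
    rw [add_comm 1 k, hBk, mul_sub, mul_one, hAkE]
  have hkey : ∀ s : ℂ[X], B * aeval B s = Ac * (aeval Ac s * (1 - E)) := by
    intro s
    induction s using Polynomial.induction_on' with
    | add f g hf hg => rw [map_add, mul_add, hf, hg, map_add, add_mul, mul_add]
    | monomial k a =>
        rw [aeval_monomial, aeval_monomial, ← Algebra.smul_def, ← Algebra.smul_def,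
          mul_smul_comm, ← pow_succ', hBk, smul_mul_assoc, mul_smul_comm, ← mul_assoc,
          ← pow_succ']
  have hann : aeval B (X * q) = 0 := by
    rw [_root_.map_mul, aeval_X, hkey, hqE, mul_zero]
  have hXq0 : (X : ℂ[X]) * q ≠ 0 := mul_ne_zero Polynomial.X_ne_zero hq0
  have hspec : ∀ μ ∈ spectrum ℂ B, (X * q : ℂ[X]).IsRoot μ := by
    intro μ hμ
    have hsub := spectrum.subset_polynomial_aeval B (X * q : ℂ[X])
    rw [hann, spectrum.zero_eq] at hsub
    have : eval μ (X * q) ∈ ({0} : Set ℂ) := hsub ⟨μ, hμ, rfl⟩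
    simpa [Polynomial.IsRoot] using this
  have hrootlt : ∀ μ : ℂ, (X * q : ℂ[X]).IsRoot μ → ‖μ‖ < 1 := by
    intro μ hμ
    rw [Polynomial.IsRoot, eval_mul, eval_X, mul_eq_zero] at hμ
    rcases hμ with h | h
    · rw [h]; simpa using one_pos
    · exact hqroots μ h
  obtain ⟨R, hR⟩ : ∃ R : Finset ℂ, R = insert 0 (X * q : ℂ[X]).roots.toFinset := ⟨_, rfl⟩
  have hRne : R.Nonempty := ⟨0, by rw [hR]; exact Finset.mem_insert_self 0 _⟩
  obtain ⟨lam0, hlam0⟩ : ∃ lam0 : ℝ, lam0 = R.sup' hRne (fun z => ‖z‖) := ⟨_, rfl⟩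
  have hlam0lt : lam0 < 1 := by
    rw [hlam0, Finset.sup'_lt_iff]
    intro z hz
    rw [hR, Finset.mem_insert] at hz
    rcases hz with h | h
    · rw [h]; simpa using one_pos
    · exact hrootlt z (Polynomial.isRoot_of_mem_roots (Multiset.mem_toFinset.mp h))
  have hlam00 : 0 ≤ lam0 := by
    have h0R : (0:ℂ) ∈ R := by rw [hR]; exact Finset.mem_insert_self 0 _
    have := Finset.le_sup' (f := fun z : ℂ => ‖z‖) h0R
    rw [hlam0]
    exact (norm_nonneg _).trans this
  obtain ⟨lam, hlam⟩ : ∃ lam : ℝ, lam = (lam0 + 1) / 2 := ⟨_, rfl⟩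
  have hlam_pos : 0 < lam := by rw [hlam]; linarith
  have hlam_lt1 : lam < 1 := by rw [hlam]; linarith
  have hlam0lam : lam0 < lam := by rw [hlam]; linarith
  have hsr : spectralRadius ℂ B < (Real.toNNReal lam : ENNReal) := by
    refine spectrum.spectralRadius_lt_of_forall_lt_of_nonempty (spectrum.nonempty B) ?_
    intro k hk
    have h1 : ‖k‖ ≤ lam0 := by
      rw [hlam0]
      refine Finset.le_sup' (f := fun z : ℂ => ‖z‖) ?_
      rw [hR, Finset.mem_insert]
      right
      rw [Multiset.mem_toFinset, Polynomial.mem_roots hXq0]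
      exact hspec k hk
    rw [← NNReal.coe_lt_coe, Real.coe_toNNReal _ hlam_pos.le]
    calc (‖k‖₊ : ℝ) = ‖k‖ := rfl
      _ ≤ lam0 := h1
      _ < lam := hlam0lam
  have hT := spectrum.pow_nnnorm_pow_one_div_tendsto_nhds_spectralRadius B
  have hev := hT.eventually_lt_const hsr
  obtain ⟨N, hN⟩ := Filter.eventually_atTop.mp hev
  have hBle : ∀ t : ℕ, max N 1 ≤ t → ‖B ^ t‖ ≤ lam ^ t := by
    intro t ht
    have ht1 : 1 ≤ t := le_trans (le_max_right N 1) ht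
    have htN : N ≤ t := le_trans (le_max_left N 1) ht
    have h := (hN t htN).le
    have ht0 : (t : ℝ) ≠ 0 := by positivity
    have h2 : ((‖B ^ t‖₊ : ENNReal) ^ (1 / (t:ℝ))) ^ (t:ℝ)
        ≤ ((Real.toNNReal lam : ENNReal)) ^ (t:ℝ) :=
      ENNReal.rpow_le_rpow h (by positivity)
    rw [← ENNReal.rpow_mul, one_div_mul_cancel ht0, ENNReal.rpow_one] at h2
    rw [← ENNReal.coe_rpow_of_nonneg _ (by positivity : (0:ℝ) ≤ (t:ℝ)),
      ENNReal.coe_le_coe] at h2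
    have h3 : ‖B ^ t‖₊ ≤ lam.toNNReal ^ t := by
      rw [← NNReal.rpow_natCast]; exact h2
    have h4 := NNReal.coe_le_coe.mpr h3
    rwa [NNReal.coe_pow, Real.coe_toNNReal _ hlam_pos.le, coe_nnnorm] at h4
  -- final assembly
  obtain ⟨T0, hT0⟩ : ∃ T0 : ℕ, T0 = max N 1 := ⟨_, rfl⟩
  obtain ⟨M, hM⟩ : ∃ M : ℝ, M = 1 + ∑ t ∈ Finset.range T0, ‖Ac ^ t - E‖ / lam ^ t := ⟨_, rfl⟩
  have hM1 : 1 ≤ M := by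
    rw [hM]
    have : 0 ≤ ∑ t ∈ Finset.range T0, ‖Ac ^ t - E‖ / lam ^ t :=
      Finset.sum_nonneg fun t _ => div_nonneg (norm_nonneg _) (by positivity)
    linarith
  have hmain : ∀ t : ℕ, ‖Ac ^ t - E‖ ≤ M * lam ^ t := by
    intro t
    rcases lt_or_ge t T0 with h | h
    · have hterm : ‖Ac ^ t - E‖ / lam ^ t ≤ M := by
        rw [hM]
        have h1 : ‖Ac ^ t - E‖ / lam ^ t ≤ ∑ r ∈ Finset.range T0, ‖Ac ^ r - E‖ / lam ^ r :=
          Finset.single_le_sum (f := fun r => ‖Ac ^ r - E‖ / lam ^ r)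
            (fun r _ => div_nonneg (norm_nonneg _) (by positivity)) (Finset.mem_range.mpr h)
        linarith
      calc ‖Ac ^ t - E‖ = (‖Ac ^ t - E‖ / lam ^ t) * lam ^ t := by field_simp
        _ ≤ M * lam ^ t := mul_le_mul_of_nonneg_right hterm (by positivity)
    · rw [hT0] at h
      have ht1 : 1 ≤ t := le_trans (le_max_right N 1) h
      rw [← hBt t ht1]
      calc ‖B ^ t‖ ≤ lam ^ t := hBle t h
        _ ≤ M * lam ^ t := le_mul_of_one_le_left (by positivity) hM1
  refine ⟨Matrix.of (fun i j => (E i j).re), M, lam, by linarith, hlam_pos, hlam_lt1, ?_⟩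
  intro t i j
  have hentry : ((A ^ t) i j : ℂ) - E i j = (Ac ^ t - E) i j := by
    rw [← hmap_pow t]; simp [Matrix.map_apply, Matrix.sub_apply]
  have h2 : ((Ac ^ t - E) i j).re = (A ^ t) i j - (E i j).re := by
    rw [← hentry]; simp
  have h1 : |(A ^ t) i j - Matrix.of (fun i j => (E i j).re) i j| ≤ ‖(Ac ^ t - E) i j‖ := by
    calc |(A ^ t) i j - Matrix.of (fun i j => (E i j).re) i j|
        = |((Ac ^ t - E) i j).re| := by rw [h2]; rfl
      _ ≤ ‖(Ac ^ t - E) i j‖ := Complex.abs_re_le_norm _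
      _ = ‖(Ac ^ t - E) i j‖ := rfl
  exact h1.trans ((entry_le_norm _ i j).trans (hmain t))

end StochasticAux
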